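/- arXiv:2203.03764 — 3 statements merged into one kernel-verified Lean document; each statement's English description precedes it below -/
import Mathlib

section
/- Fix n, d : ℕ and a compression function h : Fin (2^n) × Fin (2^n) → Fin (2^n). If two leaf vectors ℓ₁ ℓ₂ : Fin (2^d) → Fin (2^n) differ in exactly one coordinate i (i.e., ℓ₁ i ≠ ℓ₂ i and ℓ₁ j = ℓ₂ j for all j ≠ i) and their depth-d Merkle roots are equal, then there exist a level and values x ≠ y and s in Fin (2^n) such that h (x, s) = h (y, s) or h (s, x) = h (s, y); that is, h admits a collision on two distinct inputs that share their sibling component and lie on the root-to-leaf path of index i. -/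
/-- The left half of a leaf vector of a depth-`(d+1)` Merkle tree: the restriction to the
indices whose most significant bit is `0`, i.e. the indices `< 2^d`. -/
def leftHalf {n d : ℕ} (ℓ : Fin (2 ^ (d + 1)) → Fin (2 ^ n)) (j : Fin (2 ^ d)) :
    Fin (2 ^ n) :=
  ℓ ⟨j.val, by have hj := j.isLt; have h : (2 : ℕ) ^ (d + 1) = 2 ^ d * 2 := pow_succ 2 d; omega⟩

/-- The right half of a leaf vector of a depth-`(d+1)` Merkle tree: the restriction to the
indices whose most significant bit is `1`, i.e. the indices `≥ 2^d`. -/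
def rightHalf {n d : ℕ} (ℓ : Fin (2 ^ (d + 1)) → Fin (2 ^ n)) (j : Fin (2 ^ d)) :
    Fin (2 ^ n) :=
  ℓ ⟨j.val + 2 ^ d, by
    have hj := j.isLt; have h : (2 : ℕ) ^ (d + 1) = 2 ^ d * 2 := pow_succ 2 d; omega⟩

/-- The depth-`d` Merkle root of a leaf vector `ℓ : Fin (2^d) → Fin (2^n)`, computed with
the compression function `h`: for `d = 0` the root is the unique leaf; for depth `d+1` it
is `h` applied to the pair of the roots of the left and right halves. -/
def merkleRoot {n : ℕ} (h : Fin (2 ^ n) × Fin (2 ^ n) → Fin (2 ^ n)) :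
    (d : ℕ) → (Fin (2 ^ d) → Fin (2 ^ n)) → Fin (2 ^ n)
  | 0, ℓ => ℓ ⟨0, by norm_num⟩
  | d + 1, ℓ => h (merkleRoot h d (leftHalf ℓ), merkleRoot h d (rightHalf ℓ))


theorem merkle_aux {n : ℕ} (h : Fin (2 ^ n) × Fin (2 ^ n) → Fin (2 ^ n)) :
    ∀ (d : ℕ) (ℓ₁ ℓ₂ : Fin (2 ^ d) → Fin (2 ^ n)) (i : Fin (2 ^ d)),
    ℓ₁ i ≠ ℓ₂ i → (∀ j, j ≠ i → ℓ₁ j = ℓ₂ j) →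
    merkleRoot h d ℓ₁ = merkleRoot h d ℓ₂ →
    ∃ x y s : Fin (2 ^ n), x ≠ y ∧ (h (x, s) = h (y, s) ∨ h (s, x) = h (s, y)) := by
  intro d
  induction d with
  | zero =>
    intro ℓ₁ ℓ₂ i hne hagree hroot
    have : i = ⟨0, by norm_num⟩ := by
      apply Fin.ext; omega
    subst this
    exact absurd hroot hne
  | succ d ih =>
    intro ℓ₁ ℓ₂ i hne hagree hroot
    have h2 : (2 : ℕ) ^ (d + 1) = 2 ^ d * 2 := pow_succ 2 d
    by_cases hi : i.val < 2 ^ d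
    · -- i in left half
      have hr : rightHalf ℓ₁ = rightHalf ℓ₂ := by
        funext j
        apply hagree
        intro hcon
        have := congrArg Fin.val hcon
        simp [rightHalf] at this
        omega
      by_cases heq : merkleRoot h d (leftHalf ℓ₁) = merkleRoot h d (leftHalf ℓ₂)
      · refine ih (leftHalf ℓ₁) (leftHalf ℓ₂) ⟨i.val, hi⟩ ?_ ?_ heq
        · simpa [leftHalf] using hne
        · intro j hj
          apply hagree
          intro hcon
          apply hj
          apply Fin.ext
          have := congrArg Fin.val hcon
          simpa [leftHalf] using this
      · exact ⟨_, _, _, heq, Or.inl (by simpa [merkleRoot, hr] using hroot)⟩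
    · -- i in right half
      have hl : leftHalf ℓ₁ = leftHalf ℓ₂ := by
        funext j
        apply hagree
        intro hcon
        have := congrArg Fin.val hcon
        simp [leftHalf] at this
        have := j.isLt
        omega
      by_cases heq : merkleRoot h d (rightHalf ℓ₁) = merkleRoot h d (rightHalf ℓ₂)
      · have hlt : i.val - 2 ^ d < 2 ^ d := by have := i.isLt; omega
        refine ih (rightHalf ℓ₁) (rightHalf ℓ₂) ⟨i.val - 2 ^ d, hlt⟩ ?_ ?_ heq
        · have : (⟨i.val - 2 ^ d + 2 ^ d, by omega⟩ : Fin (2 ^ (d+1))) = i := by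
            apply Fin.ext; simp; omega
          simpa [rightHalf, this] using hne
        · intro j hj
          apply hagree
          intro hcon
          apply hj
          have hv : (j : ℕ) + 2 ^ d = (i : ℕ) := congrArg Fin.val hcon
          apply Fin.ext
          simp only [Fin.val_mk]
          omega
      · exact ⟨_, _, _, heq, Or.inr (by simpa [merkleRoot, hl] using hroot)⟩

/-- If two leaf vectors differ in exactly one coordinate `i` and their
depth-`d` Merkle roots are equal, then the compression function `h` admits a collision on
two distinct inputs that share their sibling component: there are values `x ≠ y` and `s`
with `h (x, s) = h (y, s)` or `h (s, x) = h (s, y)`. -/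
theorem merkle_single_leaf_change_collision {n d : ℕ}
    (h : Fin (2 ^ n) × Fin (2 ^ n) → Fin (2 ^ n))
    (ℓ₁ ℓ₂ : Fin (2 ^ d) → Fin (2 ^ n)) (i : Fin (2 ^ d))
    (hne : ℓ₁ i ≠ ℓ₂ i) (hagree : ∀ j, j ≠ i → ℓ₁ j = ℓ₂ j)
    (hroot : merkleRoot h d ℓ₁ = merkleRoot h d ℓ₂) :
    ∃ x y s : Fin (2 ^ n), x ≠ y ∧ (h (x, s) = h (y, s) ∨ h (s, x) = h (s, y)) := by
  exact merkle_aux h d ℓ₁ ℓ₂ i hne hagree hroot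
end

section
/- Fix n, d : ℕ and a compression function h : Fin (2^n) × Fin (2^n) → Fin (2^n). For any two distinct leaf vectors ℓ₁ ≠ ℓ₂ : Fin (2^d) → Fin (2^n), if their depth-d Merkle roots are equal, then there exist inputs p ≠ q in Fin (2^n) × Fin (2^n) with h p = h q; that is, equal roots on distinct leaf sets force a collision of the compression function. -/
/-- For any two distinct leaf vectors, if their depth-`d` Merkle roots are
equal, then the compression function `h` admits a collision: there are distinct inputs
`p ≠ q` in `Fin (2^n) × Fin (2^n)` with `h p = h q`.  (Equal roots on distinct leaf sets
force a collision of the compression function.) -/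
theorem merkle_root_collision_of_distinct_leaves {n d : ℕ}
    (h : Fin (2 ^ n) × Fin (2 ^ n) → Fin (2 ^ n))
    (ℓ₁ ℓ₂ : Fin (2 ^ d) → Fin (2 ^ n)) (hne : ℓ₁ ≠ ℓ₂)
    (hroot : merkleRoot h d ℓ₁ = merkleRoot h d ℓ₂) :
    ∃ p q : Fin (2 ^ n) × Fin (2 ^ n), p ≠ q ∧ h p = h q := by
  induction d with
  | zero =>
    exact absurd (funext fun i => by
      have : i = ⟨0, by norm_num⟩ := by omega
      simpa [this, merkleRoot] using hroot) hne
  | succ d ih =>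
    by_cases hpair : (merkleRoot h d (leftHalf ℓ₁), merkleRoot h d (rightHalf ℓ₁))
        = (merkleRoot h d (leftHalf ℓ₂), merkleRoot h d (rightHalf ℓ₂))
    · obtain ⟨hL, hR⟩ := Prod.mk.injEq .. ▸ hpair
      by_cases hLne : leftHalf ℓ₁ = leftHalf ℓ₂
      · have hRne : rightHalf ℓ₁ ≠ rightHalf ℓ₂ := by
          intro hREq
          apply hne
          funext i
          by_cases hi : i.val < 2 ^ d
          · have := congrFun hLne ⟨i.val, hi⟩
            simpa [leftHalf] using this
          · have := congrFun hREq ⟨i.val - 2 ^ d, by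
              have := i.isLt
              have h2 : (2 : ℕ) ^ (d + 1) = 2 ^ d * 2 := pow_succ 2 d
              omega⟩
            simp only [rightHalf] at this
            have heq : (⟨i.val - 2 ^ d + 2 ^ d, by
                have := i.isLt; omega⟩ : Fin (2 ^ (d+1))) = i := by
              ext; simp; omega
            rwa [heq] at this
        exact ih _ _ hRne hR
      · exact ih _ _ hLne hL
    · exact ⟨_, _, hpair, hroot⟩
end

section
/- Fix n, d : ℕ, a compression function h : Fin (2^n) × Fin (2^n) → Fin (2^n), a leaf vector ℓ : Fin (2^d) → Fin (2^n), and a leaf index i : Fin (2^d). Define the authentication path of i as the sequence s : Fin d → Fin (2^n) where s k is the Merkle root of the depth-k sibling subtree of i at level k (the subtree whose leaves agree with i in all binary digits above position k and differ from i at digit k). Then the iterative recomputation v₀ = ℓ i, and v_{k+1} = h (v_k, s k) if the k-th binary digit of i is 0 and v_{k+1} = h (s k, v_k) if it is 1, satisfies v_d = the depth-d Merkle root of ℓ. That is, folding the leaf value with the sibling hashes along the path, with the concatenation order at each level determined by the corresponding digit of i, reconstructs the tree root. -/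
/-- The `j`-th leaf of the depth-`k` *sibling subtree* of the leaf index `i` at level `k`:
the full tree index that agrees with `i` in all binary digits strictly above position `k`,
differs from `i` at digit `k`, and whose `k` low digits are given by `j`. -/
def sibIndex {d : ℕ} (i : Fin (2 ^ d)) (k : ℕ) (hk : k < d) (j : Fin (2 ^ k)) :
    Fin (2 ^ d) :=
  ⟨i.val / 2 ^ (k + 1) * 2 ^ (k + 1) + (if Nat.testBit i.val k then 0 else 2 ^ k) + j.val, by
    have h1 : i.val / 2 ^ (k + 1) < 2 ^ (d - (k + 1)) := by
      apply Nat.div_lt_of_lt_mul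
      have hpow : (2 : ℕ) ^ (k + 1) * 2 ^ (d - (k + 1)) = 2 ^ d := by
        rw [← pow_add]; congr 1; omega
      rw [hpow]; exact i.isLt
    have h2 : (if Nat.testBit i.val k then 0 else 2 ^ k) + j.val < 2 ^ (k + 1) := by
      have hj := j.isLt
      have hp : (2 : ℕ) ^ (k + 1) = 2 ^ k * 2 := pow_succ 2 k
      split <;> omega
    calc i.val / 2 ^ (k + 1) * 2 ^ (k + 1) + (if Nat.testBit i.val k then 0 else 2 ^ k)
            + j.val
        < (i.val / 2 ^ (k + 1) + 1) * 2 ^ (k + 1) := by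
          have := h2; ring_nf; omega
      _ ≤ 2 ^ (d - (k + 1)) * 2 ^ (k + 1) := Nat.mul_le_mul_right _ h1
      _ = 2 ^ d := by rw [← pow_add]; congr 1; omega⟩

/-- Iterative recomputation of a Merkle root from a leaf value `leafVal`, the binary digits
of the leaf index `iv`, and a sequence `s` of sibling hashes: `v 0 = leafVal` and
`v (k+1) = h (v k, s k)` if the `k`-th binary digit of `iv` is `0`, and
`v (k+1) = h (s k, v k)` if it is `1`.  `recompute h iv leafVal m s` is `v m`. -/
def recompute {n : ℕ} (h : Fin (2 ^ n) × Fin (2 ^ n) → Fin (2 ^ n)) (iv : ℕ)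
    (leafVal : Fin (2 ^ n)) : (m : ℕ) → (Fin m → Fin (2 ^ n)) → Fin (2 ^ n)
  | 0, _ => leafVal
  | m + 1, s =>
    let v := recompute h iv leafVal m fun k => s k.castSucc
    if Nat.testBit iv m then h (s (Fin.last m), v) else h (v, s (Fin.last m))


lemma recompute_congr {n : ℕ} (h : Fin (2 ^ n) × Fin (2 ^ n) → Fin (2 ^ n))
    (iv iv' : ℕ) (leaf : Fin (2 ^ n)) :
    ∀ (m : ℕ) (s : Fin m → Fin (2 ^ n)),
      (∀ k, k < m → iv.testBit k = iv'.testBit k) →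
      recompute h iv leaf m s = recompute h iv' leaf m s := by
  intro m
  induction m with
  | zero => intro s _; rfl
  | succ m ih =>
    intro s hb
    simp only [recompute]
    rw [ih _ (fun k hk => hb k (by omega)), hb m (by omega)]

lemma div_mul_pow_add {d k r : ℕ} (hk : k < d) :
    (2 ^ d + r) / 2 ^ (k + 1) * 2 ^ (k + 1) = 2 ^ d + r / 2 ^ (k + 1) * 2 ^ (k + 1) := by
  have hd : (2 : ℕ) ^ d = 2 ^ (d - (k + 1)) * 2 ^ (k + 1) := by
    rw [← pow_add]; congr 1; omega
  rw [hd, Nat.add_comm (2 ^ (d - (k + 1)) * 2 ^ (k + 1)) r,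
    Nat.add_mul_div_right _ _ (Nat.pos_of_ne_zero (by positivity)), Nat.add_mul,
    Nat.add_comm]

/-- Let `s : Fin d → Fin (2^n)` be the authentication path of the leaf
index `i`, i.e. `s k` is the Merkle root of the depth-`k` sibling subtree of `i` at level
`k`.  Then folding the leaf value `ℓ i` with the sibling hashes along the path — with the
concatenation order at each level determined by the corresponding binary digit of `i` —
reconstructs the depth-`d` Merkle root of `ℓ`. -/
theorem recompute_eq_merkleRoot {n d : ℕ}
    (h : Fin (2 ^ n) × Fin (2 ^ n) → Fin (2 ^ n))
    (ℓ : Fin (2 ^ d) → Fin (2 ^ n)) (i : Fin (2 ^ d)) (s : Fin d → Fin (2 ^ n))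
    (hs : ∀ k : Fin d, s k = merkleRoot h k.val fun j => ℓ (sibIndex i k.val k.isLt j)) :
    recompute h i.val (ℓ i) d s = merkleRoot h d ℓ := by
  
  induction d with
  | zero =>
    have h0 : i = ⟨0, by norm_num⟩ := by
      have := i.isLt; apply Fin.ext; simp at this; omega
    simp only [recompute, merkleRoot]
    exact congrArg ℓ h0
  | succ d IH =>
    simp only [recompute, merkleRoot]
    have hlt := i.isLt
    have hp : (2 : ℕ) ^ (d + 1) = 2 ^ d * 2 := pow_succ 2 d
    have hdiv0 : i.val / 2 ^ (d + 1) = 0 := Nat.div_eq_of_lt hlt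
    by_cases hb : Nat.testBit i.val d
    · -- i is in the right half
      have hge : 2 ^ d ≤ i.val := Nat.ge_two_pow_of_testBit hb
      set i' : Fin (2 ^ d) := ⟨i.val - 2 ^ d, by omega⟩ with hi'
      have hval : i.val = 2 ^ d + i'.val := by simp [hi']; omega
      have htb : ∀ k, k < d → Nat.testBit i.val k = Nat.testBit i'.val k := by
        intro k hk
        rw [hval, Nat.testBit_two_pow_add_gt hk]
      have e1 : s (Fin.last d) = merkleRoot h d (leftHalf ℓ) := by
        rw [hs (Fin.last d)]
        congr 1
        funext j
        apply congrArg ℓ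
        apply Fin.ext
        simp [sibIndex, leftHalf, hb, hdiv0]
      have e2 : recompute h i.val (ℓ i) d (fun k => s k.castSucc)
          = merkleRoot h d (rightHalf ℓ) := by
        have hℓ : ℓ i = rightHalf ℓ i' := by
          apply congrArg ℓ
          apply Fin.ext
          simp [rightHalf]; omega
        rw [hℓ, recompute_congr h i.val i'.val _ d _ htb]
        apply IH (rightHalf ℓ) i' (fun k => s k.castSucc)
        intro k
        rw [hs k.castSucc]
        congr 1
        funext j
        apply congrArg ℓ
        apply Fin.ext
        have hkd : (k : ℕ) < d := k.isLt
        have hdv : i.val / 2 ^ ((k : ℕ) + 1) * 2 ^ ((k : ℕ) + 1)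
            = 2 ^ d + i'.val / 2 ^ ((k : ℕ) + 1) * 2 ^ ((k : ℕ) + 1) := by
          rw [hval]; exact div_mul_pow_add hkd
        simp only [sibIndex, rightHalf, Fin.coe_castSucc, htb (k : ℕ) hkd, hdv]
        omega
      simp [hb, e1, e2]
    · -- i is in the left half
      have hlt2 : i.val < 2 ^ d := by
        by_contra hge
        push_neg at hge
        have hx : i.val = 2 ^ d + (i.val - 2 ^ d) := by omega
        rw [hx, Nat.testBit_two_pow_add_eq,
          Nat.testBit_lt_two_pow (by omega : i.val - 2 ^ d < 2 ^ d)] at hb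
        simp at hb
      set i' : Fin (2 ^ d) := ⟨i.val, hlt2⟩ with hi'
      have e1 : s (Fin.last d) = merkleRoot h d (rightHalf ℓ) := by
        rw [hs (Fin.last d)]
        congr 1
        funext j
        apply congrArg ℓ
        apply Fin.ext
        simp [sibIndex, rightHalf, hb, hdiv0]
        omega
      have e2 : recompute h i.val (ℓ i) d (fun k => s k.castSucc)
          = merkleRoot h d (leftHalf ℓ) := by
        have hℓ : ℓ i = leftHalf ℓ i' := by
          apply congrArg ℓ
          apply Fin.ext
          simp [leftHalf, hi']
        rw [hℓ]
        apply IH (leftHalf ℓ) i' (fun k => s k.castSucc)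
        intro k
        rw [hs k.castSucc]
        congr 1
      simp [hb, e1, e2]
end
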